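/- arXiv:2010.12811 — 2 statements merged into one kernel-verified Lean document; each statement's English description precedes it below -/
import Mathlib

section
/- For any two random variables X₁, X₂ with joint distribution P(X₁,X₂) and any measurable function g : X₁ × X₂ → ℝ, the mutual information satisfies I(X₁;X₂) ≥ E_{P(X₁,X₂)}[g(X₁,X₂)] − E_{P(X₁)⊗P(X₂)}[exp(g(X₁,X₂) − 1)]. -/
open BigOperators Finset

/-- Marginal of the first coordinate of a joint pmf on `α × β`. -/
noncomputable def margFst {α β : Type*} [Fintype α] [Fintype β] (p : α × β → ℝ) (a : α) : ℝ :=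
  ∑ b, p (a, b)

/-- Marginal of the second coordinate of a joint pmf on `α × β`. -/
noncomputable def margSnd {α β : Type*} [Fintype α] [Fintype β] (p : α × β → ℝ) (b : β) : ℝ :=
  ∑ a, p (a, b)

/-- Mutual information of a joint pmf on `α × β` (KL divergence between the joint and the
product of its marginals). -/
noncomputable def mutualInfo {α β : Type*} [Fintype α] [Fintype β] (p : α × β → ℝ) : ℝ :=
  ∑ x : α × β, p x * Real.log (p x / (margFst p x.1 * margSnd p x.2))

/-- Pointwise key inequality: `a*t - b*exp(t-1) ≤ a * log (a/b)` for `a ≥ 0`, `b ≥ 0`. -/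
lemma nwj_pointwise (a b t : ℝ) (ha : 0 ≤ a) (hb : 0 ≤ b) (hab : a ≠ 0 → b ≠ 0) :
    a * t - b * Real.exp (t - 1) ≤ a * Real.log (a / b) := by
  rcases eq_or_lt_of_le ha with h0 | hapos
  · rw [← h0]
    simp only [zero_mul, zero_sub, neg_nonpos]
    positivity
  · have hbpos : 0 < b := lt_of_le_of_ne hb (Ne.symm (hab (ne_of_gt hapos)))
    obtain ⟨u, hu⟩ : ∃ u, u = t - 1 - Real.log (a / b) := ⟨_, rfl⟩
    have hexp : b * Real.exp (t - 1) = a * Real.exp u := by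
      have : Real.exp (t - 1) = Real.exp (Real.log (a / b)) * Real.exp u := by
        rw [← Real.exp_add, hu]; ring_nf
      rw [this, Real.exp_log (by positivity)]
      field_simp
    rw [hexp]
    have h1 : 1 + u ≤ Real.exp u := by linarith [Real.add_one_le_exp u]
    have h2 : a * (1 + u) ≤ a * Real.exp u := mul_le_mul_of_nonneg_left h1 ha
    have h3 : a * (1 + u) = a * t - a * Real.log (a / b) := by rw [hu]; ring
    linarith

/-- **Nguyen–Wainwright–Jordan variational lower bound.** For any joint pmf `p` of two
random variables `X₁, X₂` on finite spaces and any function `g`,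
`I(X₁;X₂) ≥ E_P[g] − E_{P(X₁)⊗P(X₂)}[exp(g − 1)]`. -/
theorem nwj_variational_lower_bound {α β : Type*} [Fintype α] [Fintype β]
    (p : α × β → ℝ) (g : α × β → ℝ)
    (hp : ∀ x, 0 ≤ p x) (hsum : ∑ x, p x = 1) :
    mutualInfo p ≥
      (∑ x : α × β, p x * g x) -
        ∑ a, ∑ b, margFst p a * margSnd p b * Real.exp (g (a, b) - 1) := by
  have hmf : ∀ a, 0 ≤ margFst p a := fun a => Finset.sum_nonneg fun b _ => hp _
  have hms : ∀ b, 0 ≤ margSnd p b := fun b => Finset.sum_nonneg fun a _ => hp _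
  have hkey : ∀ x : α × β,
      p x * g x - margFst p x.1 * margSnd p x.2 * Real.exp (g x - 1) ≤
        p x * Real.log (p x / (margFst p x.1 * margSnd p x.2)) := by
    intro x
    apply nwj_pointwise _ _ _ (hp x) (mul_nonneg (hmf _) (hms _))
    intro hpx
    have hppos : 0 < p x := lt_of_le_of_ne (hp x) (Ne.symm hpx)
    have h1 : p x ≤ margFst p x.1 := by
      have := Finset.single_le_sum (f := fun b => p (x.1, b))
        (fun b _ => hp _) (Finset.mem_univ x.2)
      simpa [margFst] using this
    have h2 : p x ≤ margSnd p x.2 := by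
      have := Finset.single_le_sum (f := fun a => p (a, x.2))
        (fun a _ => hp _) (Finset.mem_univ x.1)
      simpa [margSnd] using this
    nlinarith
  rw [ge_iff_le, ← Fintype.sum_prod_type']
  simp only [Prod.mk.eta]
  rw [mutualInfo, ← Finset.sum_sub_distrib]
  exact Finset.sum_le_sum fun x _ => hkey x
end

section
/- Let D be a random variable and let Z_X^{(0)}, Z_A^{(1)}, Z_X^{(1)}, ..., Z_A^{(L)}, Z_X^{(L)} follow the Markovian dependence where each Z_A^{(l)} depends only on (A, Z_X^{(l−1)}) and each Z_X^{(l)} depends only on (Z_X^{(l−1)}, Z_A^{(l)}), with D = (A, X) and Z_X^{(0)} = X. If index sets S_X, S_A ⊆ {1,...,L} satisfy D ⊥ Z_X^{(L)} | ({Z_X^{(l)}}_{l∈S_X} ∪ {Z_A^{(l)}}_{l∈S_A}), then I(D; Z_X^{(L)}) ≤ Σ_{l∈S_A} AIB^{(l)} + Σ_{l∈S_X} XIB^{(l)}, where AIB^{(l)} = E[log(P(Z_A^{(l)}|A, Z_X^{(l−1)})/Q(Z_A^{(l)}))] and XIB^{(l)} = E[log(P(Z_X^{(l)}|Z_X^{(l−1)},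 Z_A^{(l)})/Q(Z_X^{(l)}))], for arbitrary variational distributions Q(Z_A^{(l)}), Q(Z_X^{(l)}). -/
set_option linter.unusedSectionVars false
set_option linter.unusedVariables false
set_option maxHeartbeats 1000000


open BigOperators Finset

/-- `Z_X^{(l-1)}`: the node features entering layer `l` (the raw features `x` for `l = 0`,
and the output of the previous layer otherwise). -/
def prevIdx {L : ℕ} {X : Type*} (x : X) (zx : Fin L → X) (l : Fin L) : X :=
  if l.1 = 0 then x else zx ⟨l.1 - 1, Nat.lt_of_le_of_lt (Nat.sub_le l.1 1) l.2⟩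

/-- The selected variables `({Z_X^{(l)}}_{l ∈ S_X}, {Z_A^{(l)}}_{l ∈ S_A})`. -/
def selOf {L : ℕ} {X T : Type*} (SX SA : Finset (Fin L))
    (za : Fin L → T) (zx : Fin L → X) :
    ({l : Fin L // l ∈ SX} → X) × ({l : Fin L // l ∈ SA} → T) :=
  (fun l => zx l.1, fun l => za l.1)

/-- The joint pmf of `(D, selected variables, Z_X^{(L)})`. -/
noncomputable def pJoint {L : ℕ} {A X T : Type*}
    [Fintype A] [Fintype X] [Fintype T] [DecidableEq X] [DecidableEq T]
    (p : (A × X) × (Fin L → T) × (Fin L → X) → ℝ) (SX SA : Finset (Fin L)) (last : Fin L)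
    (t : (A × X) × (({l : Fin L // l ∈ SX} → X) × ({l : Fin L // l ∈ SA} → T)) × X) : ℝ :=
  ∑ za : Fin L → T, ∑ zx : Fin L → X,
    if selOf SX SA za zx = t.2.1 ∧ zx last = t.2.2 then p (t.1, za, zx) else 0

lemma term_aux {r w : ℝ} (hr : 0 ≤ r) (h : 0 < r → 0 < w) (hw : 0 ≤ w) :
    r * Real.log (w / r) ≤ w - r := by
  rcases eq_or_lt_of_le hr with h0 | h0
  · simp [← h0, hw]
  · have hw' := h h0
    calc r * Real.log (w / r) ≤ r * (w / r - 1) := by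
          exact mul_le_mul_of_nonneg_left (Real.log_le_sub_one_of_pos (div_pos hw' h0)) hr
      _ = w - r := by field_simp

lemma prevIdx_succ {n : ℕ} {X : Type*} (x : X) (zx : Fin (n+1) → X) (l : Fin n) :
    prevIdx x zx l.succ = zx l.castSucc := by
  simp only [prevIdx, Fin.val_succ, Nat.succ_ne_zero, if_false, Nat.add_sub_cancel]
  rfl

lemma cons_prevIdx {n : ℕ} {X : Type*} (x0 : X) (zx : Fin n → X) (l : Fin n) :
    (Fin.cons x0 zx : Fin (n+1) → X) l.castSucc = prevIdx x0 zx l := by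
  unfold prevIdx
  by_cases h : l.1 = 0
  · have h0 : l.castSucc = 0 := by ext; simpa using h
    rw [h0, if_pos h, Fin.cons_zero]
  · have h0 : l.castSucc = Fin.succ ⟨l.1 - 1, Nat.lt_of_le_of_lt (Nat.sub_le l.1 1) l.2⟩ := by
      ext; simp; omega
    rw [h0, Fin.cons_succ, if_neg h]

lemma chain_sum {X T : Type*} [Fintype X] [Fintype T] (n : ℕ)
    (g : Fin n → X → T → X → ℝ)
    (hg : ∀ l xp, (∑ t, ∑ x', g l xp t x') = 1) (x : X) :
    ∑ za : Fin n → T, ∑ zx : Fin n → X,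
      ∏ l, g l (prevIdx x zx l) (za l) (zx l) = 1 := by
  induction n generalizing x with
  | zero => simp
  | succ n ih =>
    have hT : ∀ (F : (Fin (n+1) → T) → ℝ),
        (∑ f, F f) = ∑ a : T, ∑ f' : Fin n → T, F (Fin.cons a f') := by
      intro F
      rw [← Equiv.sum_comp (Fin.consEquiv (fun _ : Fin (n+1) => T)) F, Fintype.sum_prod_type]
      rfl
    have hX : ∀ (F : (Fin (n+1) → X) → ℝ),
        (∑ f, F f) = ∑ a : X, ∑ f' : Fin n → X, F (Fin.cons a f') := by
      intro F
      rw [← Equiv.sum_comp (Fin.consEquiv (fun _ : Fin (n+1) => X)) F, Fintype.sum_prod_type]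
      rfl
    rw [hT]
    have key : ∀ (a : T) (za' : Fin n → T),
        (∑ zx : Fin (n+1) → X, ∏ l, g l (prevIdx x zx l) ((Fin.cons a za' : Fin (n+1) → T) l) (zx l))
        = ∑ x0 : X, g 0 x a x0 *
            (∑ zx' : Fin n → X, ∏ l : Fin n,
              g l.succ (prevIdx x0 zx' l) (za' l) (zx' l)) := by
      intro a za'
      rw [hX]
      refine Finset.sum_congr rfl fun x0 _ => ?_
      rw [Finset.mul_sum]
      refine Finset.sum_congr rfl fun zx' _ => ?_
      rw [Fin.prod_univ_succ]
      congr 1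
      refine Finset.prod_congr rfl fun l _ => ?_
      rw [prevIdx_succ, cons_prevIdx, Fin.cons_succ, Fin.cons_succ]
    calc (∑ a : T, ∑ za' : Fin n → T, ∑ zx : Fin (n+1) → X,
            ∏ l, g l (prevIdx x zx l) ((Fin.cons a za' : Fin (n+1) → T) l) (zx l))
        = ∑ a : T, ∑ za' : Fin n → T, ∑ x0 : X, g 0 x a x0 *
            (∑ zx' : Fin n → X, ∏ l : Fin n,
              g l.succ (prevIdx x0 zx' l) (za' l) (zx' l)) := by
          exact Finset.sum_congr rfl fun a _ => Finset.sum_congr rfl fun za' _ => key a za'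
      _ = ∑ a : T, ∑ x0 : X, g 0 x a x0 *
            (∑ za' : Fin n → T, ∑ zx' : Fin n → X, ∏ l : Fin n,
              g l.succ (prevIdx x0 zx' l) (za' l) (zx' l)) := by
          refine Finset.sum_congr rfl fun a _ => ?_
          rw [Finset.sum_comm]
          exact Finset.sum_congr rfl fun x0 _ => (Finset.mul_sum _ _ _).symm
      _ = ∑ a : T, ∑ x0 : X, g 0 x a x0 * 1 := by
          refine Finset.sum_congr rfl fun a _ => Finset.sum_congr rfl fun x0 _ => ?_
          rw [ih (fun l => g l.succ) (fun l xp => hg l.succ xp) x0]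
      _ = 1 := by
          simp only [mul_one]
          exact hg 0 x

lemma sum_ite_and_right {g : Type*} [Fintype g] [DecidableEq g] (c : Prop) [Decidable c]
    (b : g) (v : ℝ) : (∑ x : g, if c ∧ b = x then v else 0) = if c then v else 0 := by
  split_ifs with h <;> simp [h]

lemma sum_ite_and_left {g : Type*} [Fintype g] [DecidableEq g] (c : Prop) [Decidable c]
    (b : g) (v : ℝ) : (∑ x : g, if b = x ∧ c then v else 0) = if c then v else 0 := by
  split_ifs with h <;> simp [h]

section Main
variable {A X T : Type*}
    [Fintype A] [Fintype X] [Fintype T] [DecidableEq X] [DecidableEq T]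
    {L : ℕ}


variable (pD : A × X → ℝ)
    (PA : Fin L → A × X → T → ℝ) (PX : Fin L → X × T → X → ℝ)
    (p : (A × X) × (Fin L → T) × (Fin L → X) → ℝ)

lemma sum_p
    (hPAsum : ∀ l c, ∑ t, PA l c t = 1) (hPXsum : ∀ l c, ∑ x, PX l c x = 1)
    (hfact : ∀ (d : A × X) (za : Fin L → T) (zx : Fin L → X),
      p (d, za, zx) = pD d * ∏ l : Fin L,
        PA l (d.1, prevIdx d.2 zx l) (za l) * PX l (prevIdx d.2 zx l, za l) (zx l))
    (d : A × X) :
    (∑ za : Fin L → T, ∑ zx : Fin L → X, p (d, za, zx)) = pD d := by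
  have hchain : (∑ za : Fin L → T, ∑ zx : Fin L → X,
      ∏ l, PA l (d.1, prevIdx d.2 zx l) (za l) * PX l (prevIdx d.2 zx l, za l) (zx l)) = 1 := by
    refine chain_sum L (fun l xp t x' => PA l (d.1, xp) t * PX l (xp, t) x') ?_ d.2
    intro l xp
    calc ∑ t, ∑ x', PA l (d.1, xp) t * PX l (xp, t) x'
        = ∑ t, PA l (d.1, xp) t := by
          refine Finset.sum_congr rfl fun t _ => ?_
          rw [← Finset.mul_sum, hPXsum, mul_one]
      _ = 1 := hPAsum _ _
  simp only [hfact]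
  simp only [← Finset.mul_sum]
  rw [hchain, mul_one]

lemma marg_d
    (hPAsum : ∀ l c, ∑ t, PA l c t = 1) (hPXsum : ∀ l c, ∑ x, PX l c x = 1)
    (hfact : ∀ (d : A × X) (za : Fin L → T) (zx : Fin L → X),
      p (d, za, zx) = pD d * ∏ l : Fin L,
        PA l (d.1, prevIdx d.2 zx l) (za l) * PX l (prevIdx d.2 zx l, za l) (zx l))
    (last : Fin L) (d : A × X) :
    (∑ x : X, ∑ za : Fin L → T, ∑ zx : Fin L → X, if zx last = x then p (d, za, zx) else 0)
      = pD d := by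
  rw [← sum_p pD PA PX p hPAsum hPXsum hfact d]
  rw [Finset.sum_comm]
  refine Finset.sum_congr rfl fun za _ => ?_
  rw [Finset.sum_comm]
  refine Finset.sum_congr rfl fun zx _ => ?_
  simp

theorem gib_upper_bound' (hL : 0 < L)
    (hpD : ∀ d, 0 ≤ pD d) (hpDsum : ∑ d, pD d = 1)
    (hPA : ∀ l c t, 0 ≤ PA l c t) (hPAsum : ∀ l c, ∑ t, PA l c t = 1)
    (hPX : ∀ l c x, 0 ≤ PX l c x) (hPXsum : ∀ l c, ∑ x, PX l c x = 1)
    (QA : Fin L → T → ℝ) (hQA : ∀ l t, 0 < QA l t) (hQAsum : ∀ l, ∑ t, QA l t = 1)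
    (QX : Fin L → X → ℝ) (hQX : ∀ l x, 0 < QX l x) (hQXsum : ∀ l, ∑ x, QX l x = 1)
    (hfact : ∀ (d : A × X) (za : Fin L → T) (zx : Fin L → X),
      p (d, za, zx) = pD d * ∏ l : Fin L,
        PA l (d.1, prevIdx d.2 zx l) (za l) * PX l (prevIdx d.2 zx l, za l) (zx l))
    (SX SA : Finset (Fin L))
    (last : Fin L)
    (hCI : ∀ (d : A × X) (s : ({l : Fin L // l ∈ SX} → X) × ({l : Fin L // l ∈ SA} → T))
        (xL : X),
      pJoint p SX SA last (d, s, xL) *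
          (∑ d', ∑ xL', pJoint p SX SA last (d', s, xL')) =
        (∑ xL', pJoint p SX SA last (d, s, xL')) *
          (∑ d', pJoint p SX SA last (d', s, xL))) :
    (∑ d : A × X, ∑ x : X,
        (∑ za : Fin L → T, ∑ zx : Fin L → X, if zx last = x then p (d, za, zx) else 0) *
        Real.log ((∑ za : Fin L → T, ∑ zx : Fin L → X, if zx last = x then p (d, za, zx) else 0) /
          (pD d * ∑ d' : A × X, ∑ za : Fin L → T, ∑ zx : Fin L → X, if zx last = x then p (d', za, zx) else 0))) ≤
      (∑ l ∈ SA, ∑ d : A × X, ∑ za : Fin L → T, ∑ zx : Fin L → X,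
        p (d, za, zx) *
          Real.log (PA l (d.1, prevIdx d.2 zx l) (za l) / QA l (za l))) +
      ∑ l ∈ SX, ∑ d : A × X, ∑ za : Fin L → T, ∑ zx : Fin L → X,
        p (d, za, zx) *
          Real.log (PX l (prevIdx d.2 zx l, za l) (zx l) / QX l (zx l)) := by
  classical
  set J := pJoint p SX SA last with hJdef
  -- nonnegativity
  have hp0 : ∀ (d : A × X) (za : Fin L → T) (zx : Fin L → X), 0 ≤ p (d, za, zx) := by
    intro d za zx
    rw [hfact]
    exact mul_nonneg (hpD d) (Finset.prod_nonneg fun l _ => mul_nonneg (hPA _ _ _) (hPX _ _ _))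
  have hJform : ∀ (d : A × X) s (x : X), J (d, s, x)
      = ∑ za : Fin L → T, ∑ zx : Fin L → X,
          if selOf SX SA za zx = s ∧ zx last = x then p (d, za, zx) else 0 :=
    fun d s x => rfl
  have hJ0 : ∀ (d : A × X) s (x : X), 0 ≤ J (d, s, x) := by
    intro d s x
    rw [hJform]
    refine Finset.sum_nonneg fun za _ => Finset.sum_nonneg fun zx _ => ?_
    split_ifs
    · exact hp0 _ _ _
    · exact le_refl 0
  -- collapse lemmas
  have hw1 : ∀ (d : A × X) s, (∑ x, J (d, s, x))
      = ∑ za : Fin L → T, ∑ zx : Fin L → X,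
          (if selOf SX SA za zx = s then p (d, za, zx) else 0) := by
    intro d s
    simp only [hJform]
    rw [Finset.sum_comm]
    refine Finset.sum_congr rfl fun za _ => ?_
    rw [Finset.sum_comm]
    exact Finset.sum_congr rfl fun zx _ =>
      sum_ite_and_right (selOf SX SA za zx = s) (zx last) (p (d, za, zx))
  have hQs : ∀ (d : A × X) (x : X), (∑ s, J (d, s, x))
      = ∑ za : Fin L → T, ∑ zx : Fin L → X, (if zx last = x then p (d, za, zx) else 0) := by
    intro d x
    simp only [hJform]
    rw [Finset.sum_comm]
    refine Finset.sum_congr rfl fun za _ => ?_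
    rw [Finset.sum_comm]
    exact Finset.sum_congr rfl fun zx _ =>
      sum_ite_and_left (zx last = x) (selOf SX SA za zx) (p (d, za, zx))
  have hpsum := sum_p pD PA PX p hPAsum hPXsum hfact
  have hmarg := marg_d pD PA PX p hPAsum hPXsum hfact last
  -- pD as marginals
  have hpds : ∀ d : A × X, (∑ s, ∑ x, J (d, s, x)) = pD d := by
    intro d
    rw [Finset.sum_comm]
    calc (∑ x, ∑ s, J (d, s, x))
        = ∑ x, ∑ za : Fin L → T, ∑ zx : Fin L → X,
            (if zx last = x then p (d, za, zx) else 0) := by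
          exact Finset.sum_congr rfl fun x _ => hQs d x
      _ = pD d := hmarg d
  have hpdw : ∀ d : A × X, (∑ s, ∑ za : Fin L → T, ∑ zx : Fin L → X,
      (if selOf SX SA za zx = s then p (d, za, zx) else 0)) = pD d := by
    intro d
    rw [Finset.sum_comm]
    rw [show (∑ za : Fin L → T, ∑ s, ∑ zx : Fin L → X,
        (if selOf SX SA za zx = s then p (d, za, zx) else 0))
      = ∑ za : Fin L → T, ∑ zx : Fin L → X, ∑ s,
        (if selOf SX SA za zx = s then p (d, za, zx) else 0) from
      Finset.sum_congr rfl fun za _ => Finset.sum_comm]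
    rw [← hpsum d]
    refine Finset.sum_congr rfl fun za _ => Finset.sum_congr rfl fun zx _ => ?_
    simp
  have hpdw' : ∀ d : A × X, (∑ s, ∑ x, J (d, s, x)) = pD d := hpds
  -- variational and factorization objects
  set Q2 : (({l : Fin L // l ∈ SX} → X) × ({l : Fin L // l ∈ SA} → T)) → ℝ :=
    fun s => (∏ l : {l : Fin L // l ∈ SX}, QX l.1 (s.1 l)) *
      ∏ l : {l : Fin L // l ∈ SA}, QA l.1 (s.2 l) with hQ2def
  set Psel : (A × X) → (Fin L → T) → (Fin L → X) → ℝ :=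
    fun d za zx => (∏ l ∈ SA, PA l (d.1, prevIdx d.2 zx l) (za l)) *
      ∏ l ∈ SX, PX l (prevIdx d.2 zx l, za l) (zx l) with hPseldef
  set Prest : (A × X) → (Fin L → T) → (Fin L → X) → ℝ :=
    fun d za zx => (∏ l ∈ SAᶜ, PA l (d.1, prevIdx d.2 zx l) (za l)) *
      ∏ l ∈ SXᶜ, PX l (prevIdx d.2 zx l, za l) (zx l) with hPrestdef
  have hQ2pos : ∀ s, 0 < Q2 s := fun s =>
    mul_pos (Finset.prod_pos fun l _ => hQX _ _) (Finset.prod_pos fun l _ => hQA _ _)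
  have hPsel0 : ∀ d za zx, 0 ≤ Psel d za zx := fun d za zx =>
    mul_nonneg (Finset.prod_nonneg fun l _ => hPA _ _ _)
      (Finset.prod_nonneg fun l _ => hPX _ _ _)
  have hPrest0 : ∀ d za zx, 0 ≤ Prest d za zx := fun d za zx =>
    mul_nonneg (Finset.prod_nonneg fun l _ => hPA _ _ _)
      (Finset.prod_nonneg fun l _ => hPX _ _ _)
  have hQ2sum : (∑ s, Q2 s) = 1 := by
    rw [hQ2def, Fintype.sum_prod_type]
    have h1 : (∑ s1 : {l : Fin L // l ∈ SX} → X, ∏ l, QX l.1 (s1 l)) = 1 := by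
      have h := Finset.prod_univ_sum (fun _ : {l : Fin L // l ∈ SX} => (univ : Finset X))
        (fun i x => QX i.1 x)
      rw [Fintype.piFinset_univ] at h
      rw [← h]
      simp [hQXsum]
    have h2 : (∑ s2 : {l : Fin L // l ∈ SA} → T, ∏ l, QA l.1 (s2 l)) = 1 := by
      have h := Finset.prod_univ_sum (fun _ : {l : Fin L // l ∈ SA} => (univ : Finset T))
        (fun i t => QA i.1 t)
      rw [Fintype.piFinset_univ] at h
      rw [← h]
      simp [hQAsum]
    calc ∑ s1 : {l : Fin L // l ∈ SX} → X, ∑ s2 : {l : Fin L // l ∈ SA} → T,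
          (∏ l, QX l.1 (s1 l)) * ∏ l, QA l.1 (s2 l)
        = ∑ s1 : {l : Fin L // l ∈ SX} → X,
            (∏ l, QX l.1 (s1 l)) * ∑ s2 : {l : Fin L // l ∈ SA} → T, ∏ l, QA l.1 (s2 l) := by
          exact Finset.sum_congr rfl fun s1 _ => (Finset.mul_sum _ _ _).symm
      _ = 1 := by rw [h2]; simp only [mul_one]; rw [h1]
  have hfactor : ∀ (d : A × X) za zx, p (d, za, zx) = pD d * (Psel d za zx * Prest d za zx) := by
    intro d za zx
    rw [hfact]
    congr 1
    rw [hPseldef, hPrestdef]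
    dsimp only
    rw [Finset.prod_mul_distrib]
    rw [← Finset.prod_mul_prod_compl SA (fun l => PA l (d.1, prevIdx d.2 zx l) (za l)),
        ← Finset.prod_mul_prod_compl SX (fun l => PX l (prevIdx d.2 zx l, za l) (zx l))]
    ring
  have hposfac : ∀ (d : A × X) za zx, 0 < p (d, za, zx) →
      0 < pD d ∧ ∀ l : Fin L, 0 < PA l (d.1, prevIdx d.2 zx l) (za l) ∧
        0 < PX l (prevIdx d.2 zx l, za l) (zx l) := by
    intro d za zx hppos
    rw [hfact] at hppos
    have h1 : pD d ≠ 0 := by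
      intro h; rw [h, zero_mul] at hppos; exact lt_irrefl 0 hppos
    have h2 : (∏ l, PA l (d.1, prevIdx d.2 zx l) (za l) *
        PX l (prevIdx d.2 zx l, za l) (zx l)) ≠ 0 := by
      intro h; rw [h, mul_zero] at hppos; exact lt_irrefl 0 hppos
    refine ⟨lt_of_le_of_ne (hpD d) (Ne.symm h1), fun l => ?_⟩
    have h3 := Finset.prod_ne_zero_iff.mp h2 l (mem_univ l)
    exact ⟨lt_of_le_of_ne (hPA _ _ _) (Ne.symm fun h => h3 (by simp [h])),
      lt_of_le_of_ne (hPX _ _ _) (Ne.symm fun h => h3 (by simp [h]))⟩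
  -- selected-coordinates telescoping
  have hFive : ∀ (d : A × X) (s : ({l : Fin L // l ∈ SX} → X) × ({l : Fin L // l ∈ SA} → T)),
      (∑ za : Fin L → T, ∑ zx : Fin L → X,
        (if selOf SX SA za zx = s then Prest d za zx else 0)) = 1 := by
    intro d s
    have hker : ∀ (l : Fin L) (xp : X),
        (∑ t, ∑ x',
          (if h : l ∈ SA then (if t = s.2 ⟨l, h⟩ then (1:ℝ) else 0) else PA l (d.1, xp) t) *
          (if h : l ∈ SX then (if x' = s.1 ⟨l, h⟩ then (1:ℝ) else 0) else PX l (xp, t) x')) = 1 := by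
      intro l xp
      have hXp : ∀ t : T, (∑ x',
          (if h : l ∈ SX then (if x' = s.1 ⟨l, h⟩ then (1:ℝ) else 0) else PX l (xp, t) x')) = 1 := by
        intro t
        by_cases h : l ∈ SX
        · simp [h]
        · simp only [dif_neg h]; exact hPXsum l (xp, t)
      have : ∀ t : T, (∑ x',
          (if h : l ∈ SA then (if t = s.2 ⟨l, h⟩ then (1:ℝ) else 0) else PA l (d.1, xp) t) *
          (if h : l ∈ SX then (if x' = s.1 ⟨l, h⟩ then (1:ℝ) else 0) else PX l (xp, t) x'))
          = (if h : l ∈ SA then (if t = s.2 ⟨l, h⟩ then (1:ℝ) else 0) else PA l (d.1, xp) t) := by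
        intro t
        rw [← Finset.mul_sum, hXp, mul_one]
      rw [Finset.sum_congr rfl fun t _ => this t]
      by_cases h : l ∈ SA
      · simp [h]
      · simp only [dif_neg h]; exact hPAsum l (d.1, xp)
    have hcs := chain_sum L (fun l xp t x' =>
      (if h : l ∈ SA then (if t = s.2 ⟨l, h⟩ then (1:ℝ) else 0) else PA l (d.1, xp) t) *
      (if h : l ∈ SX then (if x' = s.1 ⟨l, h⟩ then (1:ℝ) else 0) else PX l (xp, t) x')) hker d.2
    rw [← hcs]
    refine Finset.sum_congr rfl fun za _ => Finset.sum_congr rfl fun zx _ => ?_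
    by_cases hsel : selOf SX SA za zx = s
    · rw [if_pos hsel]
      have hA : ∀ (l : Fin L) (h : l ∈ SA), za l = s.2 ⟨l, h⟩ := by
        intro l h; rw [← hsel]; rfl
      have hXe : ∀ (l : Fin L) (h : l ∈ SX), zx l = s.1 ⟨l, h⟩ := by
        intro l h; rw [← hsel]; rfl
      have e1 : ∀ l : Fin L,
          (if h : l ∈ SA then (if za l = s.2 ⟨l, h⟩ then (1:ℝ) else 0)
            else PA l (d.1, prevIdx d.2 zx l) (za l)) *
          (if h : l ∈ SX then (if zx l = s.1 ⟨l, h⟩ then (1:ℝ) else 0)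
            else PX l (prevIdx d.2 zx l, za l) (zx l))
          = (if _ : l ∈ SA then (1:ℝ) else PA l (d.1, prevIdx d.2 zx l) (za l)) *
            (if _ : l ∈ SX then (1:ℝ) else PX l (prevIdx d.2 zx l, za l) (zx l)) := by
        intro l
        congr 1
        · by_cases h : l ∈ SA
          · rw [dif_pos h, dif_pos h, if_pos (hA l h)]
          · rw [dif_neg h, dif_neg h]
        · by_cases h : l ∈ SX
          · rw [dif_pos h, dif_pos h, if_pos (hXe l h)]
          · rw [dif_neg h, dif_neg h]
      rw [Finset.prod_congr rfl fun l _ => e1 l, Finset.prod_mul_distrib, hPrestdef]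
      dsimp only
      congr 1
      · rw [← Finset.prod_mul_prod_compl SA
          (fun l => if _ : l ∈ SA then (1:ℝ) else PA l (d.1, prevIdx d.2 zx l) (za l)),
          Finset.prod_eq_one (fun l hl => dif_pos hl), one_mul]
        exact Finset.prod_congr rfl fun l hl => by rw [dif_neg (Finset.mem_compl.mp hl)]
      · rw [← Finset.prod_mul_prod_compl SX
          (fun l => if _ : l ∈ SX then (1:ℝ) else PX l (prevIdx d.2 zx l, za l) (zx l)),
          Finset.prod_eq_one (fun l hl => dif_pos hl), one_mul]
        exact Finset.prod_congr rfl fun l hl => by rw [dif_neg (Finset.mem_compl.mp hl)]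
    · rw [if_neg hsel]
      have hmis : (¬ (fun (l : {l : Fin L // l ∈ SX}) => zx l.1) = s.1) ∨
          ¬ (fun (l : {l : Fin L // l ∈ SA}) => za l.1) = s.2 := by
        by_contra hcon
        push_neg at hcon
        exact hsel (Prod.ext_iff.mpr ⟨hcon.1, hcon.2⟩)
      rcases hmis with hx | ha
      · obtain ⟨l0, hl0⟩ := Function.ne_iff.mp hx
        refine (Finset.prod_eq_zero (Finset.mem_univ l0.1) ?_).symm
        rw [mul_eq_zero]
        right
        rw [dif_pos l0.2, if_neg hl0]
      · obtain ⟨l0, hl0⟩ := Function.ne_iff.mp ha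
        refine (Finset.prod_eq_zero (Finset.mem_univ l0.1) ?_).symm
        rw [mul_eq_zero]
        left
        rw [dif_pos l0.2, if_neg hl0]
  -- regrouping over the selected variables
  have hgroup : ∀ (g : (Fin L → T) → (Fin L → X) → ℝ)
      (f : (({l : Fin L // l ∈ SX} → X) × ({l : Fin L // l ∈ SA} → T)) → ℝ),
      (∑ s, (∑ za : Fin L → T, ∑ zx : Fin L → X,
        (if selOf SX SA za zx = s then g za zx else 0)) * f s)
      = ∑ za : Fin L → T, ∑ zx : Fin L → X, g za zx * f (selOf SX SA za zx) := by
    intro g f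
    have h1 : ∀ s, (∑ za : Fin L → T, ∑ zx : Fin L → X,
        (if selOf SX SA za zx = s then g za zx else 0)) * f s
        = ∑ za : Fin L → T, ∑ zx : Fin L → X,
            (if selOf SX SA za zx = s then g za zx * f s else 0) := by
      intro s
      rw [Finset.sum_mul]
      refine Finset.sum_congr rfl fun za _ => ?_
      rw [Finset.sum_mul]
      refine Finset.sum_congr rfl fun zx _ => ?_
      rw [ite_mul, zero_mul]
    rw [Finset.sum_congr rfl fun s _ => h1 s, Finset.sum_comm]
    refine Finset.sum_congr rfl fun za _ => ?_
    rw [Finset.sum_comm]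
    refine Finset.sum_congr rfl fun zx _ => ?_
    simp
  -- total masses
  have hpdsx : ∀ d : A × X, (∑ x, ∑ s, J (d, s, x)) = pD d := by
    intro d; rw [Finset.sum_comm]; exact hpds d
  have htotJ3 : (∑ d : A × X, ∑ s, ∑ x, J (d, s, x)) = 1 := by
    rw [Finset.sum_congr rfl fun d _ => hpds d, hpDsum]
  have hqLsum : (∑ x, ∑ d' : A × X, ∑ s, J (d', s, x)) = 1 := by
    rw [Finset.sum_comm, Finset.sum_congr rfl fun d _ => hpdsx d, hpDsum]
  -- Step 1 : I(D ; Z_X^L) ≤ I(D ; selected)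
  have step1 :
      (∑ d : A × X, ∑ x : X, (∑ s, J (d, s, x)) *
        Real.log ((∑ s, J (d, s, x)) / (pD d * ∑ d' : A × X, ∑ s, J (d', s, x))))
      ≤ ∑ d : A × X, ∑ s, (∑ x, J (d, s, x)) *
          Real.log ((∑ x, J (d, s, x)) / (pD d * ∑ d' : A × X, ∑ x', J (d', s, x'))) := by
    have key : ∀ (d : A × X) s (x : X),
        J (d, s, x) * Real.log ((∑ s', J (d, s', x)) /
            (pD d * ∑ d' : A × X, ∑ s', J (d', s', x)))
        ≤ J (d, s, x) * Real.log ((∑ x', J (d, s, x')) /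
              (pD d * ∑ d' : A × X, ∑ x', J (d', s, x')))
          + ((∑ d' : A × X, J (d', s, x)) *
              ((∑ s', J (d, s', x)) / (∑ d' : A × X, ∑ s', J (d', s', x))) - J (d, s, x)) := by
      intro d s x
      rcases eq_or_lt_of_le (hJ0 d s x) with h0 | h0
      · rw [← h0]
        have hnn : 0 ≤ (∑ d' : A × X, J (d', s, x)) *
            ((∑ s', J (d, s', x)) / (∑ d' : A × X, ∑ s', J (d', s', x))) :=
          mul_nonneg (Finset.sum_nonneg fun d' _ => hJ0 d' s x)
            (div_nonneg (Finset.sum_nonneg fun s' _ => hJ0 d s' x)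
              (Finset.sum_nonneg fun d' _ => Finset.sum_nonneg fun s' _ => hJ0 d' s' x))
        simp only [zero_mul, sub_zero, zero_add]
        linarith
      · have hQfpos : 0 < ∑ s', J (d, s', x) :=
          lt_of_lt_of_le h0 (Finset.single_le_sum (fun s' _ => hJ0 d s' x) (Finset.mem_univ s))
        have hw1pos : 0 < ∑ x', J (d, s, x') :=
          lt_of_lt_of_le h0 (Finset.single_le_sum (fun x' _ => hJ0 d s x') (Finset.mem_univ x))
        have hmpos : 0 < ∑ d' : A × X, J (d', s, x) :=
          lt_of_lt_of_le h0 (Finset.single_le_sum (fun d' _ => hJ0 d' s x) (Finset.mem_univ d))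
        have hqLpos : 0 < ∑ d' : A × X, ∑ s', J (d', s', x) :=
          lt_of_lt_of_le hQfpos (Finset.single_le_sum
            (fun d' _ => Finset.sum_nonneg fun s' _ => hJ0 d' s' x) (Finset.mem_univ d))
        have hrSpos : 0 < ∑ d' : A × X, ∑ x', J (d', s, x') :=
          lt_of_lt_of_le hw1pos (Finset.single_le_sum
            (fun d' _ => Finset.sum_nonneg fun x' _ => hJ0 d' s x') (Finset.mem_univ d))
        have hpDpos : 0 < pD d := by
          rw [← hpdsx d]
          exact lt_of_lt_of_le hQfpos (Finset.single_le_sum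
            (f := fun x' => ∑ s', J (d, s', x'))
            (fun x' _ => Finset.sum_nonneg fun s' _ => hJ0 d s' x') (Finset.mem_univ x))
        have hci := hCI d s x
        have hlogci : Real.log (J (d, s, x)) + Real.log (∑ d' : A × X, ∑ x', J (d', s, x'))
            = Real.log (∑ x', J (d, s, x')) + Real.log (∑ d' : A × X, J (d', s, x)) := by
          rw [← Real.log_mul h0.ne' hrSpos.ne', ← Real.log_mul hw1pos.ne' hmpos.ne', hci]
        have hwpos : 0 < (∑ d' : A × X, J (d', s, x)) *
            ((∑ s', J (d, s', x)) / (∑ d' : A × X, ∑ s', J (d', s', x))) :=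
          mul_pos hmpos (div_pos hQfpos hqLpos)
        have e0 : Real.log ((∑ s', J (d, s', x)) /
              (pD d * ∑ d' : A × X, ∑ s', J (d', s', x)))
            = Real.log ((∑ x', J (d, s, x')) /
                (pD d * ∑ d' : A × X, ∑ x', J (d', s, x')))
              + Real.log (((∑ d' : A × X, J (d', s, x)) *
                  ((∑ s', J (d, s', x)) / (∑ d' : A × X, ∑ s', J (d', s', x)))) / J (d, s, x)) := by
          rw [Real.log_div hQfpos.ne' (mul_pos hpDpos hqLpos).ne',
              Real.log_mul hpDpos.ne' hqLpos.ne',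
              Real.log_div hw1pos.ne' (mul_pos hpDpos hrSpos).ne',
              Real.log_mul hpDpos.ne' hrSpos.ne',
              Real.log_div hwpos.ne' h0.ne',
              Real.log_mul hmpos.ne' (div_pos hQfpos hqLpos).ne',
              Real.log_div hQfpos.ne' hqLpos.ne']
          linarith
        have hta := term_aux (le_of_lt h0) (fun _ => hwpos) (le_of_lt hwpos)
        rw [e0, mul_add]
        linarith
    have hcorr : ∀ x : X, (∑ s, ∑ d : A × X, ((∑ d' : A × X, J (d', s, x)) *
        ((∑ s', J (d, s', x)) / (∑ d' : A × X, ∑ s', J (d', s', x)))))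
        = ∑ d' : A × X, ∑ s', J (d', s', x) := by
      intro x
      by_cases h : (∑ d' : A × X, ∑ s', J (d', s', x)) = 0
      · rw [h]
        refine Finset.sum_eq_zero fun s _ => Finset.sum_eq_zero fun d _ => ?_
        have hQf0 : (∑ s', J (d, s', x)) = 0 :=
          (Finset.sum_eq_zero_iff_of_nonneg
            (fun d' _ => Finset.sum_nonneg fun s' _ => hJ0 d' s' x)).mp h d (Finset.mem_univ d)
        rw [hQf0, zero_div, mul_zero]
      · calc (∑ s, ∑ d : A × X, ((∑ d' : A × X, J (d', s, x)) *
              ((∑ s', J (d, s', x)) / (∑ d' : A × X, ∑ s', J (d', s', x)))))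
            = ∑ s, (∑ d' : A × X, J (d', s, x)) *
                ((∑ d : A × X, ∑ s', J (d, s', x)) / (∑ d' : A × X, ∑ s', J (d', s', x))) := by
              refine Finset.sum_congr rfl fun s _ => ?_
              rw [← Finset.mul_sum, ← Finset.sum_div]
          _ = ∑ s, (∑ d' : A × X, J (d', s, x)) := by
              refine Finset.sum_congr rfl fun s _ => ?_
              rw [div_self h, mul_one]
          _ = ∑ d' : A × X, ∑ s', J (d', s', x) := Finset.sum_comm
    have hWtot : (∑ d : A × X, ∑ s, ∑ x, ((∑ d' : A × X, J (d', s, x)) *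
        ((∑ s', J (d, s', x)) / (∑ d' : A × X, ∑ s', J (d', s', x))))) = 1 := by
      rw [Finset.sum_comm, Finset.sum_congr rfl fun s _ => Finset.sum_comm, Finset.sum_comm,
        Finset.sum_congr rfl fun x _ => hcorr x]
      exact hqLsum
    calc (∑ d : A × X, ∑ x : X, (∑ s, J (d, s, x)) *
          Real.log ((∑ s, J (d, s, x)) / (pD d * ∑ d' : A × X, ∑ s, J (d', s, x))))
        = ∑ d : A × X, ∑ x : X, ∑ s, J (d, s, x) *
            Real.log ((∑ s', J (d, s', x)) / (pD d * ∑ d' : A × X, ∑ s', J (d', s', x))) :=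
          Finset.sum_congr rfl fun d _ => Finset.sum_congr rfl fun x _ => Finset.sum_mul _ _ _
      _ = ∑ d : A × X, ∑ s, ∑ x : X, J (d, s, x) *
            Real.log ((∑ s', J (d, s', x)) / (pD d * ∑ d' : A × X, ∑ s', J (d', s', x))) :=
          Finset.sum_congr rfl fun d _ => Finset.sum_comm
      _ ≤ ∑ d : A × X, ∑ s, ∑ x : X, (J (d, s, x) *
            Real.log ((∑ x', J (d, s, x')) / (pD d * ∑ d' : A × X, ∑ x', J (d', s, x')))
          + ((∑ d' : A × X, J (d', s, x)) *
              ((∑ s', J (d, s', x)) / (∑ d' : A × X, ∑ s', J (d', s', x))) - J (d, s, x))) :=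
          Finset.sum_le_sum fun d _ => Finset.sum_le_sum fun s _ =>
            Finset.sum_le_sum fun x _ => key d s x
      _ = (∑ d : A × X, ∑ s, ∑ x : X, J (d, s, x) *
            Real.log ((∑ x', J (d, s, x')) / (pD d * ∑ d' : A × X, ∑ x', J (d', s, x'))))
          + ((∑ d : A × X, ∑ s, ∑ x, ((∑ d' : A × X, J (d', s, x)) *
              ((∑ s', J (d, s', x)) / (∑ d' : A × X, ∑ s', J (d', s', x)))))
            - ∑ d : A × X, ∑ s, ∑ x, J (d, s, x)) := by
          simp only [Finset.sum_add_distrib, Finset.sum_sub_distrib]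
      _ = ∑ d : A × X, ∑ s, ∑ x : X, J (d, s, x) *
            Real.log ((∑ x', J (d, s, x')) / (pD d * ∑ d' : A × X, ∑ x', J (d', s, x'))) := by
          rw [hWtot, htotJ3]; ring
      _ = ∑ d : A × X, ∑ s, (∑ x, J (d, s, x)) *
            Real.log ((∑ x, J (d, s, x)) / (pD d * ∑ d' : A × X, ∑ x', J (d', s, x'))) :=
          Finset.sum_congr rfl fun d _ => Finset.sum_congr rfl fun s _ =>
            (Finset.sum_mul _ _ _).symm
  -- Step 2 : replace the marginal of the selected variables by the variational Q2
  have step2 :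
      (∑ d : A × X, ∑ s, (∑ x, J (d, s, x)) *
          Real.log ((∑ x, J (d, s, x)) / (pD d * ∑ d' : A × X, ∑ x', J (d', s, x'))))
      ≤ ∑ d : A × X, ∑ s, (∑ x, J (d, s, x)) *
          Real.log ((∑ x, J (d, s, x)) / (pD d * Q2 s)) := by
    have e2 : ∀ (d : A × X) s, (∑ x, J (d, s, x)) *
        Real.log ((∑ x, J (d, s, x)) / (pD d * ∑ d' : A × X, ∑ x', J (d', s, x')))
        = (∑ x, J (d, s, x)) * Real.log ((∑ x, J (d, s, x)) / (pD d * Q2 s))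
          + (∑ x, J (d, s, x)) * Real.log (Q2 s / (∑ d' : A × X, ∑ x', J (d', s, x'))) := by
      intro d s
      rcases eq_or_lt_of_le (Finset.sum_nonneg fun x _ => hJ0 d s x) with h0 | h0
      · rw [← h0]; ring
      · have hrSpos : 0 < ∑ d' : A × X, ∑ x', J (d', s, x') :=
          lt_of_lt_of_le h0 (Finset.single_le_sum
            (fun d' _ => Finset.sum_nonneg fun x' _ => hJ0 d' s x') (Finset.mem_univ d))
        have hpDpos : 0 < pD d := by
          rw [← hpds d]
          exact lt_of_lt_of_le h0 (Finset.single_le_sum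
            (f := fun s' => ∑ x, J (d, s', x))
            (fun s' _ => Finset.sum_nonneg fun x _ => hJ0 d s' x) (Finset.mem_univ s))
        rw [← mul_add]
        congr 1
        rw [Real.log_div h0.ne' (mul_pos hpDpos hrSpos).ne', Real.log_mul hpDpos.ne' hrSpos.ne',
            Real.log_div h0.ne' (mul_pos hpDpos (hQ2pos s)).ne',
            Real.log_mul hpDpos.ne' (hQ2pos s).ne',
            Real.log_div (hQ2pos s).ne' hrSpos.ne']
        ring
    have hrSsum : (∑ s, ∑ d' : A × X, ∑ x', J (d', s, x')) = 1 := by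
      rw [Finset.sum_comm]; exact htotJ3
    have hgibbs : (∑ s, (∑ d' : A × X, ∑ x', J (d', s, x')) *
        Real.log (Q2 s / (∑ d' : A × X, ∑ x', J (d', s, x')))) ≤ 0 := by
      calc (∑ s, (∑ d' : A × X, ∑ x', J (d', s, x')) *
            Real.log (Q2 s / (∑ d' : A × X, ∑ x', J (d', s, x'))))
          ≤ ∑ s, (Q2 s - ∑ d' : A × X, ∑ x', J (d', s, x')) :=
            Finset.sum_le_sum fun s _ => term_aux
              (Finset.sum_nonneg fun d' _ => Finset.sum_nonneg fun x' _ => hJ0 d' s x')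
              (fun _ => hQ2pos s) (le_of_lt (hQ2pos s))
        _ = 0 := by rw [Finset.sum_sub_distrib, hQ2sum, hrSsum]; ring
    have hsplit : (∑ d : A × X, ∑ s, (∑ x, J (d, s, x)) *
          Real.log ((∑ x, J (d, s, x)) / (pD d * ∑ d' : A × X, ∑ x', J (d', s, x'))))
        = (∑ d : A × X, ∑ s, (∑ x, J (d, s, x)) *
            Real.log ((∑ x, J (d, s, x)) / (pD d * Q2 s)))
          + ∑ s, (∑ d' : A × X, ∑ x', J (d', s, x')) *
              Real.log (Q2 s / (∑ d' : A × X, ∑ x', J (d', s, x'))) := by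
      rw [Finset.sum_congr rfl fun d _ => Finset.sum_congr rfl fun s _ => e2 d s]
      rw [Finset.sum_congr rfl fun (d : A × X) _ => Finset.sum_add_distrib,
        Finset.sum_add_distrib]
      congr 1
      rw [Finset.sum_comm]
      exact Finset.sum_congr rfl fun s _ => (Finset.sum_mul _ _ _).symm
    rw [hsplit]
    linarith
  -- the right-hand side as a single expectation
  have hRHSeq : (∑ l ∈ SA, ∑ d : A × X, ∑ za : Fin L → T, ∑ zx : Fin L → X,
        p (d, za, zx) * Real.log (PA l (d.1, prevIdx d.2 zx l) (za l) / QA l (za l))) +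
      (∑ l ∈ SX, ∑ d : A × X, ∑ za : Fin L → T, ∑ zx : Fin L → X,
        p (d, za, zx) * Real.log (PX l (prevIdx d.2 zx l, za l) (zx l) / QX l (zx l)))
      = ∑ d : A × X, ∑ za : Fin L → T, ∑ zx : Fin L → X,
          p (d, za, zx) * Real.log (Psel d za zx / Q2 (selOf SX SA za zx)) := by
    have hswap : ∀ (S : Finset (Fin L)) (F : Fin L → (A × X) → (Fin L → T) → (Fin L → X) → ℝ),
        (∑ l ∈ S, ∑ d : A × X, ∑ za : Fin L → T, ∑ zx : Fin L → X, F l d za zx)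
        = ∑ d : A × X, ∑ za : Fin L → T, ∑ zx : Fin L → X, ∑ l ∈ S, F l d za zx := by
      intro S F
      rw [Finset.sum_comm]
      refine Finset.sum_congr rfl fun d _ => ?_
      rw [Finset.sum_comm]
      exact Finset.sum_congr rfl fun za _ => Finset.sum_comm
    rw [hswap, hswap, ← Finset.sum_add_distrib]
    refine Finset.sum_congr rfl fun d _ => ?_
    rw [← Finset.sum_add_distrib]
    refine Finset.sum_congr rfl fun za _ => ?_
    rw [← Finset.sum_add_distrib]
    refine Finset.sum_congr rfl fun zx _ => ?_
    rcases eq_or_lt_of_le (hp0 d za zx) with h0 | h0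
    · rw [← h0]; simp
    · obtain ⟨hpDpos, hfac⟩ := hposfac d za zx h0
      have hPselpos : 0 < Psel d za zx := by
        rw [hPseldef]
        exact mul_pos (Finset.prod_pos fun l _ => (hfac l).1)
          (Finset.prod_pos fun l _ => (hfac l).2)
      rw [← Finset.mul_sum, ← Finset.mul_sum, ← mul_add]
      congr 1
      have hsumA : (∑ l ∈ SA, Real.log (PA l (d.1, prevIdx d.2 zx l) (za l) / QA l (za l)))
          = Real.log (∏ l ∈ SA, PA l (d.1, prevIdx d.2 zx l) (za l))
            - Real.log (∏ l ∈ SA, QA l (za l)) := by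
        rw [Real.log_prod (fun l _ => ((hfac l).1).ne'),
            Real.log_prod (fun l _ => (hQA l (za l)).ne'), ← Finset.sum_sub_distrib]
        exact Finset.sum_congr rfl fun l _ =>
          Real.log_div ((hfac l).1).ne' (hQA l (za l)).ne'
      have hsumX : (∑ l ∈ SX, Real.log (PX l (prevIdx d.2 zx l, za l) (zx l) / QX l (zx l)))
          = Real.log (∏ l ∈ SX, PX l (prevIdx d.2 zx l, za l) (zx l))
            - Real.log (∏ l ∈ SX, QX l (zx l)) := by
        rw [Real.log_prod (fun l _ => ((hfac l).2).ne'),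
            Real.log_prod (fun l _ => (hQX l (zx l)).ne'), ← Finset.sum_sub_distrib]
        exact Finset.sum_congr rfl fun l _ =>
          Real.log_div ((hfac l).2).ne' (hQX l (zx l)).ne'
      have hQ2sel : Q2 (selOf SX SA za zx)
          = (∏ l ∈ SX, QX l (zx l)) * ∏ l ∈ SA, QA l (za l) := by
        rw [hQ2def]
        dsimp only [selOf]
        congr 1
        · exact Finset.prod_coe_sort SX (fun l => QX l (zx l))
        · exact Finset.prod_coe_sort SA (fun l => QA l (za l))
      have hprodA : 0 < ∏ l ∈ SA, PA l (d.1, prevIdx d.2 zx l) (za l) :=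
        Finset.prod_pos fun l _ => (hfac l).1
      have hprodX : 0 < ∏ l ∈ SX, PX l (prevIdx d.2 zx l, za l) (zx l) :=
        Finset.prod_pos fun l _ => (hfac l).2
      have hqA : 0 < ∏ l ∈ SA, QA l (za l) := Finset.prod_pos fun l _ => hQA l (za l)
      have hqX : 0 < ∏ l ∈ SX, QX l (zx l) := Finset.prod_pos fun l _ => hQX l (zx l)
      rw [hsumA, hsumX, Real.log_div hPselpos.ne' (hQ2pos (selOf SX SA za zx)).ne', hQ2sel,
        Real.log_mul hqX.ne' hqA.ne', hPseldef]
      dsimp only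
      rw [Real.log_mul hprodA.ne' hprodX.ne']
      ring
  -- Step 3 : variational bound on the information of the selected variables
  have step3 :
      (∑ d : A × X, ∑ s, (∑ x, J (d, s, x)) *
          Real.log ((∑ x, J (d, s, x)) / (pD d * Q2 s)))
      ≤ ∑ d : A × X, ∑ za : Fin L → T, ∑ zx : Fin L → X,
          p (d, za, zx) * Real.log (Psel d za zx / Q2 (selOf SX SA za zx)) := by
    have hLrw : ∀ d : A × X, (∑ s, (∑ x, J (d, s, x)) *
        Real.log ((∑ x, J (d, s, x)) / (pD d * Q2 s)))
        = ∑ za : Fin L → T, ∑ zx : Fin L → X, p (d, za, zx) *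
            Real.log ((∑ x, J (d, selOf SX SA za zx, x)) /
              (pD d * Q2 (selOf SX SA za zx))) := by
      intro d
      rw [show (∑ s, (∑ x, J (d, s, x)) * Real.log ((∑ x, J (d, s, x)) / (pD d * Q2 s)))
          = ∑ s, (∑ za : Fin L → T, ∑ zx : Fin L → X,
              (if selOf SX SA za zx = s then p (d, za, zx) else 0)) *
              Real.log ((∑ x, J (d, s, x)) / (pD d * Q2 s)) from
        Finset.sum_congr rfl fun s _ => by rw [← hw1 d s]]
      exact hgroup (fun za zx => p (d, za, zx))
        (fun s => Real.log ((∑ x, J (d, s, x)) / (pD d * Q2 s)))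
    have key3 : ∀ (d : A × X) (za : Fin L → T) (zx : Fin L → X),
        p (d, za, zx) * Real.log ((∑ x, J (d, selOf SX SA za zx, x)) /
            (pD d * Q2 (selOf SX SA za zx)))
        ≤ p (d, za, zx) * Real.log (Psel d za zx / Q2 (selOf SX SA za zx))
          + ((∑ x, J (d, selOf SX SA za zx, x)) * Prest d za zx - p (d, za, zx)) := by
      intro d za zx
      rcases eq_or_lt_of_le (hp0 d za zx) with h0 | h0
      · rw [← h0]
        have hnn : 0 ≤ (∑ x, J (d, selOf SX SA za zx, x)) * Prest d za zx :=
          mul_nonneg (Finset.sum_nonneg fun x _ => hJ0 d _ x) (hPrest0 d za zx)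
        simp only [zero_mul, sub_zero, zero_add]
        linarith
      · obtain ⟨hpDpos, hfac⟩ := hposfac d za zx h0
        have hPselpos : 0 < Psel d za zx := by
          rw [hPseldef]
          exact mul_pos (Finset.prod_pos fun l _ => (hfac l).1)
            (Finset.prod_pos fun l _ => (hfac l).2)
        have hPrestpos : 0 < Prest d za zx := by
          rw [hPrestdef]
          exact mul_pos (Finset.prod_pos fun l _ => (hfac l).1)
            (Finset.prod_pos fun l _ => (hfac l).2)
        have hterm : ∀ (za' : Fin L → T) (zx' : Fin L → X),
            0 ≤ (if selOf SX SA za' zx' = selOf SX SA za zx then p (d, za', zx') else 0) := by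
          intro za' zx'
          split_ifs
          · exact hp0 d za' zx'
          · exact le_refl 0
        have hw1pos : 0 < ∑ x, J (d, selOf SX SA za zx, x) := by
          rw [hw1]
          have h1 : p (d, za, zx) ≤ ∑ zx' : Fin L → X,
              (if selOf SX SA za zx' = selOf SX SA za zx then p (d, za, zx') else 0) := by
            have := Finset.single_le_sum
              (f := fun zx' => if selOf SX SA za zx' = selOf SX SA za zx
                then p (d, za, zx') else 0)
              (fun zx' _ => hterm za zx') (Finset.mem_univ zx)
            simpa using this
          exact lt_of_lt_of_le h0 (h1.trans (Finset.single_le_sum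
            (f := fun za' => ∑ zx' : Fin L → X,
              (if selOf SX SA za' zx' = selOf SX SA za zx then p (d, za', zx') else 0))
            (fun za' _ => Finset.sum_nonneg fun zx' _ => hterm za' zx')
            (Finset.mem_univ za)))
        have hQ2p := hQ2pos (selOf SX SA za zx)
        have hwpos : 0 < (∑ x, J (d, selOf SX SA za zx, x)) * Prest d za zx :=
          mul_pos hw1pos hPrestpos
        have e0 : Real.log ((∑ x, J (d, selOf SX SA za zx, x)) /
              (pD d * Q2 (selOf SX SA za zx)))
            = Real.log (Psel d za zx / Q2 (selOf SX SA za zx))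
              + Real.log (((∑ x, J (d, selOf SX SA za zx, x)) * Prest d za zx) /
                  p (d, za, zx)) := by
          have hlogp : Real.log (p (d, za, zx))
              = Real.log (pD d) + (Real.log (Psel d za zx) + Real.log (Prest d za zx)) := by
            rw [hfactor d za zx, Real.log_mul hpDpos.ne' (mul_pos hPselpos hPrestpos).ne',
              Real.log_mul hPselpos.ne' hPrestpos.ne']
          rw [Real.log_div hw1pos.ne' (mul_pos hpDpos hQ2p).ne',
              Real.log_mul hpDpos.ne' hQ2p.ne',
              Real.log_div hPselpos.ne' hQ2p.ne',
              Real.log_div hwpos.ne' h0.ne',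
              Real.log_mul hw1pos.ne' hPrestpos.ne']
          linarith
        have hta := term_aux (le_of_lt h0) (fun _ => hwpos) (le_of_lt hwpos)
        rw [e0, mul_add]
        linarith
    have hnu : ∀ d : A × X, (∑ za : Fin L → T, ∑ zx : Fin L → X,
        (∑ x, J (d, selOf SX SA za zx, x)) * Prest d za zx) = pD d := by
      intro d
      have hc : (∑ za : Fin L → T, ∑ zx : Fin L → X,
          (∑ x, J (d, selOf SX SA za zx, x)) * Prest d za zx)
          = ∑ za : Fin L → T, ∑ zx : Fin L → X,
              Prest d za zx * (∑ x, J (d, selOf SX SA za zx, x)) :=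
        Finset.sum_congr rfl fun za _ => Finset.sum_congr rfl fun zx _ => mul_comm _ _
      rw [hc, ← hgroup (fun za zx => Prest d za zx) (fun s => ∑ x, J (d, s, x))]
      rw [Finset.sum_congr rfl fun s _ => by rw [hFive d s, one_mul]]
      exact hpds d
    have h1 : (∑ d : A × X, ∑ za : Fin L → T, ∑ zx : Fin L → X,
        (∑ x, J (d, selOf SX SA za zx, x)) * Prest d za zx) = 1 := by
      rw [Finset.sum_congr rfl fun d _ => hnu d, hpDsum]
    have h2 : (∑ d : A × X, ∑ za : Fin L → T, ∑ zx : Fin L → X, p (d, za, zx)) = 1 := by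
      rw [Finset.sum_congr rfl fun d _ => hpsum d, hpDsum]
    calc (∑ d : A × X, ∑ s, (∑ x, J (d, s, x)) *
            Real.log ((∑ x, J (d, s, x)) / (pD d * Q2 s)))
        = ∑ d : A × X, ∑ za : Fin L → T, ∑ zx : Fin L → X, p (d, za, zx) *
            Real.log ((∑ x, J (d, selOf SX SA za zx, x)) /
              (pD d * Q2 (selOf SX SA za zx))) :=
          Finset.sum_congr rfl fun d _ => hLrw d
      _ ≤ ∑ d : A × X, ∑ za : Fin L → T, ∑ zx : Fin L → X,
            (p (d, za, zx) * Real.log (Psel d za zx / Q2 (selOf SX SA za zx))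
              + ((∑ x, J (d, selOf SX SA za zx, x)) * Prest d za zx - p (d, za, zx))) :=
          Finset.sum_le_sum fun d _ => Finset.sum_le_sum fun za _ =>
            Finset.sum_le_sum fun zx _ => key3 d za zx
      _ = (∑ d : A × X, ∑ za : Fin L → T, ∑ zx : Fin L → X,
            p (d, za, zx) * Real.log (Psel d za zx / Q2 (selOf SX SA za zx)))
          + ((∑ d : A × X, ∑ za : Fin L → T, ∑ zx : Fin L → X,
              (∑ x, J (d, selOf SX SA za zx, x)) * Prest d za zx)
            - ∑ d : A × X, ∑ za : Fin L → T, ∑ zx : Fin L → X, p (d, za, zx)) := by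
          simp only [Finset.sum_add_distrib, Finset.sum_sub_distrib]
      _ = ∑ d : A × X, ∑ za : Fin L → T, ∑ zx : Fin L → X,
            p (d, za, zx) * Real.log (Psel d za zx / Q2 (selOf SX SA za zx)) := by
          rw [h1, h2]; ring
  -- assemble
  have hfinal := le_trans (le_trans step1 step2) (le_trans step3 (le_of_eq hRHSeq.symm))
  simp only [← hQs]
  exact hfinal

end Main

/-- **Proposition 3.2 of the GIB paper.** Let `D = (A, X)` with pmf `pD`, and let the
variables `Z_A^{(l)}, Z_X^{(l)}`, `l ∈ {1,…,L}`, follow the hierarchical Markov chain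
`Z_A^{(l)} ∼ P(·|A, Z_X^{(l-1)})`, `Z_X^{(l)} ∼ P(·|Z_X^{(l-1)}, Z_A^{(l)})` with
`Z_X^{(0)} = X` (hypothesis `hfact`). If the index sets `S_X, S_A` satisfy
`D ⊥ Z_X^{(L)} | ({Z_X^{(l)}}_{l∈S_X} ∪ {Z_A^{(l)}}_{l∈S_A})` (hypothesis `hCI`), then
`I(D; Z_X^{(L)}) ≤ ∑_{l∈S_A} AIB^{(l)} + ∑_{l∈S_X} XIB^{(l)}` for arbitrary variational
distributions `Q_A^{(l)}, Q_X^{(l)}`, where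
`AIB^{(l)} = E[log(P(Z_A^{(l)}|A, Z_X^{(l−1)})/Q(Z_A^{(l)}))]` and
`XIB^{(l)} = E[log(P(Z_X^{(l)}|Z_X^{(l−1)}, Z_A^{(l)})/Q(Z_X^{(l)}))]`. -/
theorem gib_upper_bound {A X T : Type*}
    [Fintype A] [Fintype X] [Fintype T] [DecidableEq X] [DecidableEq T]
    (L : ℕ) (hL : 0 < L)
    (pD : A × X → ℝ) (hpD : ∀ d, 0 ≤ pD d) (hpDsum : ∑ d, pD d = 1)
    (PA : Fin L → A × X → T → ℝ)
    (hPA : ∀ l c t, 0 ≤ PA l c t) (hPAsum : ∀ l c, ∑ t, PA l c t = 1)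
    (PX : Fin L → X × T → X → ℝ)
    (hPX : ∀ l c x, 0 ≤ PX l c x) (hPXsum : ∀ l c, ∑ x, PX l c x = 1)
    (QA : Fin L → T → ℝ) (hQA : ∀ l t, 0 < QA l t) (hQAsum : ∀ l, ∑ t, QA l t = 1)
    (QX : Fin L → X → ℝ) (hQX : ∀ l x, 0 < QX l x) (hQXsum : ∀ l, ∑ x, QX l x = 1)
    (p : (A × X) × (Fin L → T) × (Fin L → X) → ℝ)
    (hfact : ∀ (d : A × X) (za : Fin L → T) (zx : Fin L → X),
      p (d, za, zx) = pD d * ∏ l : Fin L,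
        PA l (d.1, prevIdx d.2 zx l) (za l) * PX l (prevIdx d.2 zx l, za l) (zx l))
    (SX SA : Finset (Fin L))
    (last : Fin L) (hlast : last = ⟨L - 1, Nat.sub_lt hL one_pos⟩)
    (hCI : ∀ (d : A × X) (s : ({l : Fin L // l ∈ SX} → X) × ({l : Fin L // l ∈ SA} → T))
        (xL : X),
      pJoint p SX SA last (d, s, xL) *
          (∑ d', ∑ xL', pJoint p SX SA last (d', s, xL')) =
        (∑ xL', pJoint p SX SA last (d, s, xL')) *
          (∑ d', pJoint p SX SA last (d', s, xL))) :
    mutualInfo (fun q : (A × X) × X =>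
        ∑ za : Fin L → T, ∑ zx : Fin L → X,
          if zx last = q.2 then p (q.1, za, zx) else 0) ≤
      (∑ l ∈ SA, ∑ d : A × X, ∑ za : Fin L → T, ∑ zx : Fin L → X,
        p (d, za, zx) *
          Real.log (PA l (d.1, prevIdx d.2 zx l) (za l) / QA l (za l))) +
      ∑ l ∈ SX, ∑ d : A × X, ∑ za : Fin L → T, ∑ zx : Fin L → X,
        p (d, za, zx) *
          Real.log (PX l (prevIdx d.2 zx l, za l) (zx l) / QX l (zx l)) := by
  classical
  have hmain := gib_upper_bound' pD PA PX p hL hpD hpDsum hPA hPAsum hPX hPXsum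
    QA hQA hQAsum QX hQX hQXsum hfact SX SA last hCI
  refine le_trans (le_of_eq ?_) hmain
  unfold mutualInfo margFst margSnd
  rw [Fintype.sum_prod_type]
  refine Finset.sum_congr rfl fun d _ => Finset.sum_congr rfl fun x _ => ?_
  dsimp only
  rw [marg_d pD PA PX p hPAsum hPXsum hfact last d]
end
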